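/- Let G be a perfect subgroup of the piecewise-linear orientation-preserving homeomorphisms of [0,1] and let H be a normal subgroup of G with supt H = supt G. Then H = G. -/

import Mathlib

open Set
open scoped commutatorElement

/-- A permutation of `[0,1]` is piecewise linear if there is a finite partition of `[0,1]`
on whose pieces it is affine. -/
def IsPL (f : Equiv.Perm (Icc (0:ℝ) 1)) : Prop :=
  ∃ (n : ℕ) (t : Fin (n + 2) → ℝ), StrictMono t ∧ t 0 = 0 ∧ t (Fin.last (n + 1)) = 1 ∧
    ∀ i : Fin (n + 1), ∃ a b : ℝ, ∀ x : Icc (0:ℝ) 1,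
      (x : ℝ) ∈ Icc (t i.castSucc) (t i.succ) → (f x : ℝ) = a * (x : ℝ) + b

namespace Stmt4Aux

abbrev XX : Type := ↥(Icc (0:ℝ) 1)
abbrev PP : Type := Equiv.Perm XX

noncomputable section

def supp (g : PP) : Set XX := {x | g x ≠ x}

lemma supp_apply_mem {g : PP} {x : XX} (hx : x ∈ supp g) : g x ∈ supp g := by
  intro h
  exact hx (g.injective h)

lemma not_supp {g : PP} {x : XX} (hx : x ∉ supp g) : g x = x := not_not.mp hx

lemma not_supp_inv {g : PP} {x : XX} (hx : x ∉ supp g) : g⁻¹ x = x := by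
  have h := not_supp hx
  calc g⁻¹ x = g⁻¹ (g x) := by rw [h]
  _ = x := by simp

def z0 : XX := ⟨0, by constructor <;> norm_num⟩
def z1 : XX := ⟨1, by constructor <;> norm_num⟩

lemma perm_fix_z0 (g : PP) (hm : Monotone ⇑g) : g z0 = z0 := by
  obtain ⟨w, hw⟩ := g.surjective z0
  have h0 : z0 ≤ w := w.2.1
  have := hm h0
  rw [hw] at this
  exact le_antisymm this (g z0).2.1

lemma perm_fix_z1 (g : PP) (hm : Monotone ⇑g) : g z1 = z1 := by
  obtain ⟨w, hw⟩ := g.surjective z1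
  have h0 : w ≤ z1 := w.2.2
  have := hm h0
  rw [hw] at this
  exact le_antisymm (g z1).2.2 this

/-! ### Germs -/

/-- `g` is affine with slope `a` just to the right of `p`. -/
def GermR (p : XX) (g : PP) (a : ℝ) : Prop :=
  ∃ δ : ℝ, 0 < δ ∧ (p:ℝ) + δ ≤ 1 ∧
    ∀ x : XX, (p:ℝ) ≤ x → (x:ℝ) ≤ (p:ℝ) + δ → (g x : ℝ) = p + a * ((x:ℝ) - p)

/-- `g` is affine with slope `a` just to the left of `p`. -/
def GermL (p : XX) (g : PP) (a : ℝ) : Prop :=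
  ∃ δ : ℝ, 0 < δ ∧ 0 ≤ (p:ℝ) - δ ∧
    ∀ x : XX, (p:ℝ) - δ ≤ x → (x:ℝ) ≤ (p:ℝ) → (g x : ℝ) = p + a * ((x:ℝ) - p)

lemma GermR.mul {p : XX} {f g : PP} {a b : ℝ} (hb : 0 < b)
    (hf : GermR p f a) (hg : GermR p g b) : GermR p (f * g) (a * b) := by
  obtain ⟨δf, hδf, hδf1, hfw⟩ := hf
  obtain ⟨δg, hδg, hδg1, hgw⟩ := hg
  refine ⟨min δg (δf / b), lt_min hδg (div_pos hδf hb), ?_, ?_⟩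
  · have h := min_le_left δg (δf / b)
    linarith
  · intro x hx1 hx2
    have hml := min_le_left δg (δf / b)
    have hmr := min_le_right δg (δf / b)
    have hgx := hgw x hx1 (by linarith)
    have h1 : (p:ℝ) ≤ (g x : ℝ) := by nlinarith
    have h2 : ((g x : XX) : ℝ) ≤ (p:ℝ) + δf := by
      have hxb : (x:ℝ) - p ≤ δf / b := by linarith
      have : b * ((x:ℝ) - p) ≤ δf := by
        rw [← le_div_iff₀' hb]
        exact hxb
      nlinarith
    have h3 := hfw (g x) h1 h2
    rw [Equiv.Perm.mul_apply, h3, hgx]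
    ring

lemma GermR.inv {p : XX} {g : PP} {a : ℝ} (ha : 0 < a)
    (h : GermR p g a) : GermR p g⁻¹ a⁻¹ := by
  obtain ⟨δ, hδ, hδ1, hw⟩ := h
  have hp1 : (p:ℝ) < 1 := by linarith
  refine ⟨min (a * δ) (1 - p), lt_min (by positivity) (by linarith), ?_, ?_⟩
  · have h := min_le_right (a * δ) (1 - p)
    linarith
  · intro x hx1 hx2
    have hp0 : (0:ℝ) ≤ p := p.2.1
    have hxp : (0:ℝ) ≤ (x:ℝ) - p := by linarith
    have hdiv0 : (0:ℝ) ≤ ((x:ℝ) - p) / a := div_nonneg hxp ha.le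
    have hyr1 : (p:ℝ) + ((x:ℝ) - p) / a ≤ (p:ℝ) + δ := by
      have hml := min_le_left (a * δ) (1 - p)
      have hle : (x:ℝ) - p ≤ a * δ := by linarith
      have : ((x:ℝ) - p) / a ≤ δ := by
        rw [div_le_iff₀ ha]
        linarith [mul_comm a δ]
      linarith
    have hyr0 : (0:ℝ) ≤ (p:ℝ) + ((x:ℝ) - p) / a := by linarith
    have hyr2 : (p:ℝ) + ((x:ℝ) - p) / a ≤ 1 := le_trans hyr1 hδ1
    set yX : XX := ⟨(p:ℝ) + ((x:ℝ) - p) / a, hyr0, hyr2⟩ with hyX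
    have hgy : (g yX : ℝ) = x := by
      have h1 : (p:ℝ) ≤ (yX:ℝ) := by
        simp only [hyX]
        linarith
      have := hw yX h1 hyr1
      rw [this]
      simp only [hyX]
      field_simp
      ring
    have hgyX : g yX = x := Subtype.ext hgy
    have hfin : g⁻¹ x = yX := by rw [← hgyX]; simp
    rw [hfin]
    simp only [hyX]
    field_simp

lemma GermL.mul {p : XX} {f g : PP} {a b : ℝ} (hb : 0 < b)
    (hf : GermL p f a) (hg : GermL p g b) : GermL p (f * g) (a * b) := by
  obtain ⟨δf, hδf, hδf1, hfw⟩ := hf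
  obtain ⟨δg, hδg, hδg1, hgw⟩ := hg
  refine ⟨min δg (δf / b), lt_min hδg (div_pos hδf hb), ?_, ?_⟩
  · have h := min_le_left δg (δf / b)
    linarith
  · intro x hx1 hx2
    have hml := min_le_left δg (δf / b)
    have hmr := min_le_right δg (δf / b)
    have hgx := hgw x (by linarith) hx2
    have h1 : (g x : ℝ) ≤ (p:ℝ) := by nlinarith
    have h2 : (p:ℝ) - δf ≤ ((g x : XX) : ℝ) := by
      have hxb : (p:ℝ) - (x:ℝ) ≤ δf / b := by linarith
      have : b * ((p:ℝ) - x) ≤ δf := by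
        rw [← le_div_iff₀' hb]
        exact hxb
      nlinarith
    have h3 := hfw (g x) h2 h1
    rw [Equiv.Perm.mul_apply, h3, hgx]
    ring

lemma GermL.inv {p : XX} {g : PP} {a : ℝ} (ha : 0 < a)
    (h : GermL p g a) : GermL p g⁻¹ a⁻¹ := by
  obtain ⟨δ, hδ, hδ1, hw⟩ := h
  have hp0 : 0 < (p:ℝ) := by linarith
  refine ⟨min (a * δ) (p:ℝ), lt_min (by positivity) hp0, ?_, ?_⟩
  · have h := min_le_right (a * δ) (p:ℝ)
    linarith
  · intro x hx1 hx2
    have hp1 : (p:ℝ) ≤ 1 := p.2.2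
    have hxp : (x:ℝ) - p ≤ 0 := by linarith
    have hdiv0 : ((x:ℝ) - p) / a ≤ 0 := div_nonpos_of_nonpos_of_nonneg hxp ha.le
    have hyr1 : (p:ℝ) - δ ≤ (p:ℝ) + ((x:ℝ) - p) / a := by
      have hml := min_le_left (a * δ) (p:ℝ)
      have hle : (p:ℝ) - (x:ℝ) ≤ a * δ := by linarith
      have : ((p:ℝ) - x) / a ≤ δ := by
        rw [div_le_iff₀ ha]
        linarith [mul_comm a δ]
      have h4 : -(((x:ℝ) - p) / a) ≤ δ := by
        rw [← neg_div]
        convert this using 2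
        ring
      linarith
    have hyr0 : (0:ℝ) ≤ (p:ℝ) + ((x:ℝ) - p) / a := by linarith
    have hyr2 : (p:ℝ) + ((x:ℝ) - p) / a ≤ 1 := by linarith
    set yX : XX := ⟨(p:ℝ) + ((x:ℝ) - p) / a, hyr0, hyr2⟩ with hyX
    have hgy : (g yX : ℝ) = x := by
      have h1 : (yX:ℝ) ≤ (p:ℝ) := by
        simp only [hyX]
        linarith
      have := hw yX hyr1 h1
      rw [this]
      simp only [hyX]
      field_simp
      ring
    have hgyX : g yX = x := Subtype.ext hgy
    have hfin : g⁻¹ x = yX := by rw [← hgyX]; simp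
    rw [hfin]
    simp only [hyX]
    field_simp

/-! ### finding pieces -/

lemma piece_find {n : ℕ} {t : Fin (n+2) → ℝ} (hm : StrictMono t) (h0 : t 0 = 0)
    (h1 : t (Fin.last (n+1)) = 1) {r : ℝ} (hr0 : 0 ≤ r) (hr1 : r < 1) :
    ∃ j : Fin (n+1), t j.castSucc ≤ r ∧ r < t j.succ := by
  classical
  set S : Finset (Fin (n+2)) := Finset.univ.filter (fun i => t i ≤ r) with hS
  have h0S : (0 : Fin (n+2)) ∈ S := by
    simp only [hS, Finset.mem_filter, Finset.mem_univ, true_and]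
    rw [h0]
    exact hr0
  have hne : S.Nonempty := ⟨0, h0S⟩
  have himem : S.max' hne ∈ S := S.max'_mem hne
  have hile : t (S.max' hne) ≤ r := (Finset.mem_filter.mp himem).2
  have hilast : S.max' hne ≠ Fin.last (n+1) := by
    intro h
    rw [h, h1] at hile
    linarith
  have hival : ((S.max' hne) : ℕ) < n + 1 := Fin.val_lt_last hilast
  refine ⟨⟨((S.max' hne) : ℕ), hival⟩, ?_, ?_⟩
  · have hcs : (⟨((S.max' hne) : ℕ), hival⟩ : Fin (n+1)).castSucc = S.max' hne := by
      ext
      simp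
    rw [hcs]
    exact hile
  · by_contra hc
    push_neg at hc
    have hmem2 : (⟨((S.max' hne) : ℕ), hival⟩ : Fin (n+1)).succ ∈ S := by
      simp only [hS, Finset.mem_filter, Finset.mem_univ, true_and]
      exact hc
    have hle2 := Finset.le_max' S _ hmem2
    have hcs : (⟨((S.max' hne) : ℕ), hival⟩ : Fin (n+1)).castSucc = S.max' hne := by
      ext
      simp
    have hlt : (⟨((S.max' hne) : ℕ), hival⟩ : Fin (n+1)).castSucc
        < (⟨((S.max' hne) : ℕ), hival⟩ : Fin (n+1)).succ := Fin.castSucc_lt_succ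
    rw [hcs] at hlt
    exact absurd (lt_of_lt_of_le hlt hle2) (lt_irrefl _)

lemma piece_find_left {n : ℕ} {t : Fin (n+2) → ℝ} (hm : StrictMono t) (h0 : t 0 = 0)
    (h1 : t (Fin.last (n+1)) = 1) {r : ℝ} (hr0 : 0 < r) (hr1 : r ≤ 1) :
    ∃ j : Fin (n+1), t j.castSucc < r ∧ r ≤ t j.succ := by
  classical
  set S : Finset (Fin (n+2)) := Finset.univ.filter (fun i => r ≤ t i) with hS
  have h0S : (Fin.last (n+1)) ∈ S := by
    simp only [hS, Finset.mem_filter, Finset.mem_univ, true_and]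
    rw [h1]
    exact hr1
  have hne : S.Nonempty := ⟨_, h0S⟩
  have himem : S.min' hne ∈ S := S.min'_mem hne
  have hile : r ≤ t (S.min' hne) := (Finset.mem_filter.mp himem).2
  have hi0 : S.min' hne ≠ 0 := by
    intro h
    rw [h, h0] at hile
    linarith
  have hival1 : 1 ≤ ((S.min' hne) : ℕ) := by
    by_contra h
    push_neg at h
    interval_cases hval : ((S.min' hne) : ℕ)
    · exact hi0 (Fin.ext hval)
  have hival2 : ((S.min' hne) : ℕ) - 1 < n + 1 := by
    have := (S.min' hne).2
    omega
  refine ⟨⟨((S.min' hne) : ℕ) - 1, hival2⟩, ?_, ?_⟩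
  · by_contra hc
    push_neg at hc
    have hmem2 : (⟨((S.min' hne) : ℕ) - 1, hival2⟩ : Fin (n+1)).castSucc ∈ S := by
      simp only [hS, Finset.mem_filter, Finset.mem_univ, true_and]
      exact hc
    have hle2 := Finset.min'_le S _ hmem2
    have hsucceq : (⟨((S.min' hne) : ℕ) - 1, hival2⟩ : Fin (n+1)).succ = S.min' hne := by
      ext
      simp only [Fin.val_succ]
      omega
    have hlt : (⟨((S.min' hne) : ℕ) - 1, hival2⟩ : Fin (n+1)).castSucc
        < (⟨((S.min' hne) : ℕ) - 1, hival2⟩ : Fin (n+1)).succ := Fin.castSucc_lt_succ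
    rw [hsucceq] at hlt
    exact absurd (lt_of_le_of_lt hle2 hlt) (lt_irrefl _)
  · have hsucceq : (⟨((S.min' hne) : ℕ) - 1, hival2⟩ : Fin (n+1)).succ = S.min' hne := by
      ext
      simp only [Fin.val_succ]
      omega
    rw [hsucceq]
    exact hile

section Main

variable {G H : Subgroup PP}

/-! ### basic consequences of the hypotheses -/

lemma g_sm (hG : ∀ g ∈ G, Continuous (⇑(g : PP)) ∧ Monotone ⇑g ∧ IsPL g)
    {g : PP} (hg : g ∈ G) : StrictMono ⇑g :=
  (hG g hg).2.1.strictMono_of_injective g.injective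

lemma exists_germ_right (hG : ∀ g ∈ G, Continuous (⇑(g : PP)) ∧ Monotone ⇑g ∧ IsPL g)
    {g : PP} (hg : g ∈ G) {p : XX} (hp : g p = p) (hp1 : (p:ℝ) < 1) :
    ∃ a : ℝ, 0 < a ∧ GermR p g a := by
  obtain ⟨n, t, hmn, h0, h1, hpieces⟩ := (hG g hg).2.2
  obtain ⟨j, hj1, hj2⟩ := piece_find hmn h0 h1 p.2.1 hp1
  obtain ⟨a, b, hab⟩ := hpieces j
  have hpm : (p:ℝ) ∈ Icc (t j.castSucc) (t j.succ) := ⟨hj1, le_of_lt hj2⟩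
  have hpp := hab p hpm
  rw [hp] at hpp
  have hb : b = (p:ℝ) - a * p := by linarith
  have hs1 : t j.succ ≤ 1 := by rw [← h1]; exact hmn.monotone (Fin.le_last _)
  have hs0 : 0 ≤ t j.succ := by rw [← h0]; exact hmn.monotone (Fin.zero_le _)
  have hδ : 0 < t j.succ - (p:ℝ) := by linarith
  have hwin : ∀ x : XX, (p:ℝ) ≤ x → (x:ℝ) ≤ (p:ℝ) + (t j.succ - (p:ℝ)) →
      (g x : ℝ) = p + a * ((x:ℝ) - p) := by
    intro x h1x h2x
    have hxm : (x:ℝ) ∈ Icc (t j.castSucc) (t j.succ) := ⟨le_trans hj1 h1x, by linarith⟩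
    rw [hab x hxm, hb]
    ring
  have hxe0 : (0:ℝ) ≤ t j.succ := hs0
  set xe : XX := ⟨t j.succ, hxe0, hs1⟩ with hxe
  have hpe : p < xe := by
    rw [← Subtype.coe_lt_coe]
    exact hj2
  have hge : (g xe : ℝ) = p + a * (t j.succ - p) := by
    apply hwin xe (le_of_lt hj2)
    simp only [hxe]
    linarith
  have hlt : (g p : ℝ) < (g xe : ℝ) := Subtype.coe_lt_coe.mpr ((g_sm hG hg) hpe)
  rw [hp, hge] at hlt
  have hapos : 0 < a := by nlinarith
  exact ⟨a, hapos, t j.succ - p, hδ, by linarith, hwin⟩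

lemma exists_germ_left (hG : ∀ g ∈ G, Continuous (⇑(g : PP)) ∧ Monotone ⇑g ∧ IsPL g)
    {g : PP} (hg : g ∈ G) {p : XX} (hp : g p = p) (hp0 : 0 < (p:ℝ)) :
    ∃ a : ℝ, 0 < a ∧ GermL p g a := by
  obtain ⟨n, t, hmn, h0, h1, hpieces⟩ := (hG g hg).2.2
  obtain ⟨j, hj1, hj2⟩ := piece_find_left hmn h0 h1 hp0 p.2.2
  obtain ⟨a, b, hab⟩ := hpieces j
  have hpm : (p:ℝ) ∈ Icc (t j.castSucc) (t j.succ) := ⟨le_of_lt hj1, hj2⟩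
  have hpp := hab p hpm
  rw [hp] at hpp
  have hb : b = (p:ℝ) - a * p := by linarith
  have hs1 : t j.castSucc ≤ 1 := by rw [← h1]; exact hmn.monotone (Fin.le_last _)
  have hs0 : 0 ≤ t j.castSucc := by rw [← h0]; exact hmn.monotone (Fin.zero_le _)
  have hδ : 0 < (p:ℝ) - t j.castSucc := by linarith
  have hwin : ∀ x : XX, (p:ℝ) - ((p:ℝ) - t j.castSucc) ≤ x → (x:ℝ) ≤ (p:ℝ) →
      (g x : ℝ) = p + a * ((x:ℝ) - p) := by
    intro x h1x h2x
    have hxm : (x:ℝ) ∈ Icc (t j.castSucc) (t j.succ) := ⟨by linarith, le_trans h2x hj2⟩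
    rw [hab x hxm, hb]
    ring
  set xe : XX := ⟨t j.castSucc, hs0, hs1⟩ with hxe
  have hpe : xe < p := by
    rw [← Subtype.coe_lt_coe]
    exact hj1
  have hge : (g xe : ℝ) = p + a * (t j.castSucc - p) := by
    apply hwin xe
    · simp only [hxe]
      linarith
    · exact le_of_lt hj1
  have hlt : (g xe : ℝ) < (g p : ℝ) := Subtype.coe_lt_coe.mpr ((g_sm hG hg) hpe)
  rw [hp, hge] at hlt
  have hapos : 0 < a := by nlinarith
  exact ⟨a, hapos, (p:ℝ) - t j.castSucc, hδ, by linarith, hwin⟩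

/-! ### perfectness kills germs -/

def rightIdSub (p : XX) : Subgroup PP where
  carrier := {g : PP | ∃ δ : ℝ, 0 < δ ∧ ∀ x : XX, (p:ℝ) ≤ x → (x:ℝ) ≤ (p:ℝ) + δ → g x = x}
  mul_mem' := by
    rintro f g ⟨δf, hδf, hf⟩ ⟨δg, hδg, hg⟩
    refine ⟨min δf δg, lt_min hδf hδg, ?_⟩
    intro x h1 h2
    have hml := min_le_left δf δg
    have hmr := min_le_right δf δg
    have hgx : g x = x := hg x h1 (by linarith)
    rw [Equiv.Perm.mul_apply, hgx]
    exact hf x h1 (by linarith)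
  one_mem' := ⟨1, one_pos, fun x _ _ => rfl⟩
  inv_mem' := by
    rintro g ⟨δ, hδ, h⟩
    refine ⟨δ, hδ, ?_⟩
    intro x h1 h2
    have hh := h x h1 h2
    calc g⁻¹ x = g⁻¹ (g x) := by rw [hh]
    _ = x := by simp

def leftIdSub (p : XX) : Subgroup PP where
  carrier := {g : PP | ∃ δ : ℝ, 0 < δ ∧ ∀ x : XX, (p:ℝ) - δ ≤ x → (x:ℝ) ≤ (p:ℝ) → g x = x}
  mul_mem' := by
    rintro f g ⟨δf, hδf, hf⟩ ⟨δg, hδg, hg⟩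
    refine ⟨min δf δg, lt_min hδf hδg, ?_⟩
    intro x h1 h2
    have hml := min_le_left δf δg
    have hmr := min_le_right δf δg
    have hgx : g x = x := hg x (by linarith) h2
    rw [Equiv.Perm.mul_apply, hgx]
    exact hf x (by linarith) h2
  one_mem' := ⟨1, one_pos, fun x _ _ => rfl⟩
  inv_mem' := by
    rintro g ⟨δ, hδ, h⟩
    refine ⟨δ, hδ, ?_⟩
    intro x h1 h2
    have hh := h x h1 h2
    calc g⁻¹ x = g⁻¹ (g x) := by rw [hh]
    _ = x := by simp

lemma all_right_id (hG : ∀ g ∈ G, Continuous (⇑(g : PP)) ∧ Monotone ⇑g ∧ IsPL g)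
    (hperf : G = ⁅G, G⁆) {p : XX} (hfix : ∀ f ∈ G, f p = p) {g : PP} (hg : g ∈ G) :
    ∃ δ : ℝ, 0 < δ ∧ ∀ x : XX, (p:ℝ) ≤ x → (x:ℝ) ≤ (p:ℝ) + δ → g x = x := by
  by_cases hp1 : (p:ℝ) < 1
  · have hle : G ≤ rightIdSub p := by
      rw [hperf, Subgroup.commutator_le]
      intro g₁ hg₁ g₂ hg₂
      obtain ⟨a, ha, hfa⟩ := exists_germ_right hG hg₁ (hfix g₁ hg₁) hp1
      obtain ⟨b, hb, hfb⟩ := exists_germ_right hG hg₂ (hfix g₂ hg₂) hp1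
      have hc : GermR p (g₁ * g₂ * g₁⁻¹ * g₂⁻¹) (a * b * a⁻¹ * b⁻¹) :=
        ((hfa.mul hb hfb).mul (by positivity) (hfa.inv ha)).mul (by positivity) (hfb.inv hb)
      have hval : a * b * a⁻¹ * b⁻¹ = 1 := by
        rw [mul_right_comm a b a⁻¹, mul_inv_cancel₀ ha.ne', one_mul,
          mul_inv_cancel₀ hb.ne']
      rw [hval] at hc
      obtain ⟨δ, hδ, hδ1, hw⟩ := hc
      refine ⟨δ, hδ, ?_⟩
      intro x h1 h2
      apply Subtype.ext
      rw [commutatorElement_def]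
      rw [hw x h1 h2]
      ring
    exact hle hg
  · push_neg at hp1
    have hp1' : (p:ℝ) = 1 := le_antisymm p.2.2 hp1
    refine ⟨1, one_pos, ?_⟩
    intro x h1 _
    have hxp : x = p := Subtype.ext (le_antisymm (by rw [hp1']; exact x.2.2) h1)
    rw [hxp]
    exact hfix g hg

lemma all_left_id (hG : ∀ g ∈ G, Continuous (⇑(g : PP)) ∧ Monotone ⇑g ∧ IsPL g)
    (hperf : G = ⁅G, G⁆) {p : XX} (hfix : ∀ f ∈ G, f p = p) {g : PP} (hg : g ∈ G) :
    ∃ δ : ℝ, 0 < δ ∧ ∀ x : XX, (p:ℝ) - δ ≤ x → (x:ℝ) ≤ (p:ℝ) → g x = x := by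
  by_cases hp0 : 0 < (p:ℝ)
  · have hle : G ≤ leftIdSub p := by
      rw [hperf, Subgroup.commutator_le]
      intro g₁ hg₁ g₂ hg₂
      obtain ⟨a, ha, hfa⟩ := exists_germ_left hG hg₁ (hfix g₁ hg₁) hp0
      obtain ⟨b, hb, hfb⟩ := exists_germ_left hG hg₂ (hfix g₂ hg₂) hp0
      have hc : GermL p (g₁ * g₂ * g₁⁻¹ * g₂⁻¹) (a * b * a⁻¹ * b⁻¹) :=
        ((hfa.mul hb hfb).mul (by positivity) (hfa.inv ha)).mul (by positivity) (hfb.inv hb)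
      have hval : a * b * a⁻¹ * b⁻¹ = 1 := by
        rw [mul_right_comm a b a⁻¹, mul_inv_cancel₀ ha.ne', one_mul,
          mul_inv_cancel₀ hb.ne']
      rw [hval] at hc
      obtain ⟨δ, hδ, hδ1, hw⟩ := hc
      refine ⟨δ, hδ, ?_⟩
      intro x h1 h2
      apply Subtype.ext
      rw [commutatorElement_def]
      rw [hw x h1 h2]
      ring
    exact hle hg
  · push_neg at hp0
    have hp0' : (p:ℝ) = 0 := le_antisymm hp0 p.2.1
    refine ⟨1, one_pos, ?_⟩
    intro x _ h2
    have hxp : x = p := Subtype.ext (le_antisymm h2 (by rw [hp0']; exact x.2.1))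
    rw [hxp]
    exact hfix g hg

lemma near_id (hG : ∀ g ∈ G, Continuous (⇑(g : PP)) ∧ Monotone ⇑g ∧ IsPL g)
    (hperf : G = ⁅G, G⁆) {p : XX} (hfix : ∀ f ∈ G, f p = p) {g : PP} (hg : g ∈ G) :
    ∃ δ : ℝ, 0 < δ ∧ ∀ x : XX, |(x:ℝ) - (p:ℝ)| ≤ δ → g x = x := by
  obtain ⟨δR, hδR, hR⟩ := all_right_id hG hperf hfix hg
  obtain ⟨δL, hδL, hL⟩ := all_left_id hG hperf hfix hg
  refine ⟨min δR δL, lt_min hδR hδL, ?_⟩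
  intro x hx
  rw [abs_le] at hx
  obtain ⟨hx1, hx2⟩ := hx
  have hml := min_le_left δR δL
  have hmr := min_le_right δR δL
  rcases le_total (x:ℝ) (p:ℝ) with h | h
  · exact hL x (by linarith) h
  · exact hR x h (by linarith)

/-! ### the fixed-point set and orbitals -/

def FixAll (G : Subgroup PP) : Set XX := {x | ∀ g ∈ G, g x = x}

def FixAllR (G : Subgroup PP) : Set ℝ := (fun x : XX => (x:ℝ)) '' FixAll G

lemma FixAllR_subset : FixAllR G ⊆ Icc (0:ℝ) 1 := by
  rintro r ⟨y, _, rfl⟩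
  exact y.2

lemma z0_mem_fix (hG : ∀ g ∈ G, Continuous (⇑(g : PP)) ∧ Monotone ⇑g ∧ IsPL g) :
    z0 ∈ FixAll G := fun g hg => perm_fix_z0 g (hG g hg).2.1

lemma z1_mem_fix (hG : ∀ g ∈ G, Continuous (⇑(g : PP)) ∧ Monotone ⇑g ∧ IsPL g) :
    z1 ∈ FixAll G := fun g hg => perm_fix_z1 g (hG g hg).2.1

lemma isCompact_FixAllR (hG : ∀ g ∈ G, Continuous (⇑(g : PP)) ∧ Monotone ⇑g ∧ IsPL g) :
    IsCompact (FixAllR G) := by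
  have hcl : IsClosed (FixAll G) := by
    have heq : FixAll G = ⋂ (g : PP), ⋂ (_ : g ∈ G), {x : XX | g x = x} := by
      ext x
      simp [FixAll]
    rw [heq]
    exact isClosed_iInter fun g => isClosed_iInter fun hg =>
      isClosed_eq (hG g hg).1 continuous_id
  exact hcl.isCompact.image continuous_subtype_val

def oL (G : Subgroup PP) (x : XX) : ℝ := sSup (FixAllR G ∩ Iic (x:ℝ))

def oR (G : Subgroup PP) (x : XX) : ℝ := sInf (FixAllR G ∩ Ici (x:ℝ))

lemma oL_set_nonempty (hG : ∀ g ∈ G, Continuous (⇑(g : PP)) ∧ Monotone ⇑g ∧ IsPL g)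
    (x : XX) : (FixAllR G ∩ Iic (x:ℝ)).Nonempty :=
  ⟨0, ⟨z0, z0_mem_fix hG, rfl⟩, x.2.1⟩

lemma oR_set_nonempty (hG : ∀ g ∈ G, Continuous (⇑(g : PP)) ∧ Monotone ⇑g ∧ IsPL g)
    (x : XX) : (FixAllR G ∩ Ici (x:ℝ)).Nonempty :=
  ⟨1, ⟨z1, z1_mem_fix hG, rfl⟩, x.2.2⟩

lemma oL_mem (hG : ∀ g ∈ G, Continuous (⇑(g : PP)) ∧ Monotone ⇑g ∧ IsPL g)
    (x : XX) : oL G x ∈ FixAllR G ∩ Iic (x:ℝ) :=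
  ((isCompact_FixAllR hG).inter_right isClosed_Iic).sSup_mem (oL_set_nonempty hG x)

lemma oR_mem (hG : ∀ g ∈ G, Continuous (⇑(g : PP)) ∧ Monotone ⇑g ∧ IsPL g)
    (x : XX) : oR G x ∈ FixAllR G ∩ Ici (x:ℝ) :=
  ((isCompact_FixAllR hG).inter_right isClosed_Ici).sInf_mem (oR_set_nonempty hG x)

lemma le_oL (hG : ∀ g ∈ G, Continuous (⇑(g : PP)) ∧ Monotone ⇑g ∧ IsPL g)
    {x : XX} {r : ℝ} (hr : r ∈ FixAllR G) (hrx : r ≤ (x:ℝ)) : r ≤ oL G x :=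
  le_csSup ((isCompact_FixAllR hG).inter_right isClosed_Iic).bddAbove ⟨hr, hrx⟩

lemma oR_le (hG : ∀ g ∈ G, Continuous (⇑(g : PP)) ∧ Monotone ⇑g ∧ IsPL g)
    {x : XX} {r : ℝ} (hr : r ∈ FixAllR G) (hrx : (x:ℝ) ≤ r) : oR G x ≤ r :=
  csInf_le ((isCompact_FixAllR hG).inter_right isClosed_Ici).bddBelow ⟨hr, hrx⟩

lemma oL_lt (hG : ∀ g ∈ G, Continuous (⇑(g : PP)) ∧ Monotone ⇑g ∧ IsPL g)
    {x : XX} (hx : x ∉ FixAll G) : oL G x < (x:ℝ) := by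
  have h := oL_mem hG x
  rcases lt_or_eq_of_le (mem_Iic.mp h.2) with h' | h'
  · exact h'
  · exfalso
    obtain ⟨y, hy, hyc⟩ := h.1
    rw [h'] at hyc
    have hyx : y = x := Subtype.ext hyc
    exact hx (hyx ▸ hy)

lemma lt_oR (hG : ∀ g ∈ G, Continuous (⇑(g : PP)) ∧ Monotone ⇑g ∧ IsPL g)
    {x : XX} (hx : x ∉ FixAll G) : (x:ℝ) < oR G x := by
  have h := oR_mem hG x
  rcases lt_or_eq_of_le (mem_Ici.mp h.2) with h' | h'
  · exact h'
  · exfalso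
    obtain ⟨y, hy, hyc⟩ := h.1
    rw [← h'] at hyc
    have hyx : y = x := Subtype.ext hyc
    exact hx (hyx ▸ hy)

lemma oL_nonneg (hG : ∀ g ∈ G, Continuous (⇑(g : PP)) ∧ Monotone ⇑g ∧ IsPL g)
    (x : XX) : 0 ≤ oL G x := (FixAllR_subset (oL_mem hG x).1).1

lemma oR_le_one (hG : ∀ g ∈ G, Continuous (⇑(g : PP)) ∧ Monotone ⇑g ∧ IsPL g)
    (x : XX) : oR G x ≤ 1 := (FixAllR_subset (oR_mem hG x).1).2

lemma oL_apply (hG : ∀ g ∈ G, Continuous (⇑(g : PP)) ∧ Monotone ⇑g ∧ IsPL g)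
    {g : PP} (hg : g ∈ G) (x : XX) : oL G (g x) = oL G x := by
  unfold oL
  congr 1
  ext r
  simp only [mem_inter_iff, mem_Iic, and_congr_right_iff]
  rintro ⟨y, hy, rfl⟩
  rw [Subtype.coe_le_coe, Subtype.coe_le_coe]
  constructor
  · intro h
    have h2 := (hG g⁻¹ (G.inv_mem hg)).2.1 h
    rw [hy g⁻¹ (G.inv_mem hg)] at h2
    simpa using h2
  · intro h
    have h2 := (hG g hg).2.1 h
    rw [hy g hg] at h2
    exact h2

lemma not_fix_between (hG : ∀ g ∈ G, Continuous (⇑(g : PP)) ∧ Monotone ⇑g ∧ IsPL g)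
    {x : XX} {r : ℝ} (hr : r ∈ FixAllR G) : ¬(oL G x < r ∧ r < oR G x) := by
  rintro ⟨h1, h2⟩
  rcases le_total r (x:ℝ) with h | h
  · exact absurd (le_oL hG hr h) (not_le.mpr h1)
  · exact absurd (oR_le hG hr h) (not_le.mpr h2)

lemma strip_not_fix (hG : ∀ g ∈ G, Continuous (⇑(g : PP)) ∧ Monotone ⇑g ∧ IsPL g)
    {x₀ y : XX} (h1 : oL G x₀ < (y:ℝ)) (h2 : (y:ℝ) < oR G x₀) : y ∉ FixAll G :=
  fun hy => not_fix_between hG ⟨y, hy, rfl⟩ ⟨h1, h2⟩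

lemma oL_strip (hG : ∀ g ∈ G, Continuous (⇑(g : PP)) ∧ Monotone ⇑g ∧ IsPL g)
    {x₀ y : XX} (h1 : oL G x₀ < (y:ℝ)) (h2 : (y:ℝ) < oR G x₀) : oL G y = oL G x₀ := by
  apply le_antisymm
  · by_contra hc
    push_neg at hc
    have hm := oL_mem hG y
    have h3 : oL G y < oR G x₀ := lt_of_le_of_lt (mem_Iic.mp hm.2) h2
    exact not_fix_between hG hm.1 ⟨hc, h3⟩
  · exact le_oL hG (oL_mem hG x₀).1 (le_of_lt h1)

lemma oR_congr_le (hG : ∀ g ∈ G, Continuous (⇑(g : PP)) ∧ Monotone ⇑g ∧ IsPL g)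
    {x x₀ : XX} (hle : x ≤ x₀) (hx : x ∉ FixAll G) (heq : oL G x = oL G x₀) :
    oR G x = oR G x₀ := by
  apply le_antisymm
  · have hm := oR_mem hG x₀
    exact oR_le hG hm.1 (le_trans (Subtype.coe_le_coe.mpr hle) (mem_Ici.mp hm.2))
  · have hm := oR_mem hG x
    have hge : (x₀:ℝ) ≤ oR G x := by
      by_contra hcon
      push_neg at hcon
      have h4 : oR G x ≤ oL G x₀ := le_oL hG hm.1 (le_of_lt hcon)
      rw [← heq] at h4
      have h5 := oL_lt hG hx
      have h6 := mem_Ici.mp hm.2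
      exact absurd (lt_of_le_of_lt h4 h5) (not_lt.mpr h6)
    exact csInf_le ((isCompact_FixAllR hG).inter_right isClosed_Ici).bddBelow ⟨hm.1, hge⟩

lemma strip_mem_of_oL_eq (hG : ∀ g ∈ G, Continuous (⇑(g : PP)) ∧ Monotone ⇑g ∧ IsPL g)
    {x x₀ : XX} (hx : x ∉ FixAll G) (hx₀ : x₀ ∉ FixAll G) (heq : oL G x = oL G x₀) :
    oL G x₀ < (x:ℝ) ∧ (x:ℝ) < oR G x₀ := by
  constructor
  · rw [← heq]
    exact oL_lt hG hx
  · rcases le_total x x₀ with h | h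
    · rw [← oR_congr_le hG h hx heq]
      exact lt_oR hG hx
    · rw [oR_congr_le hG h hx₀ heq.symm]
      exact lt_oR hG hx

lemma exists_oL_pt (hG : ∀ g ∈ G, Continuous (⇑(g : PP)) ∧ Monotone ⇑g ∧ IsPL g)
    (x : XX) : ∃ pX : XX, pX ∈ FixAll G ∧ (pX:ℝ) = oL G x := by
  obtain ⟨⟨y, hy, hyc⟩, -⟩ := oL_mem hG x
  exact ⟨y, hy, hyc⟩

lemma exists_oR_pt (hG : ∀ g ∈ G, Continuous (⇑(g : PP)) ∧ Monotone ⇑g ∧ IsPL g)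
    (x : XX) : ∃ qX : XX, qX ∈ FixAll G ∧ (qX:ℝ) = oR G x := by
  obtain ⟨⟨y, hy, hyc⟩, -⟩ := oR_mem hG x
  exact ⟨y, hy, hyc⟩

lemma strip_apply (hG : ∀ g ∈ G, Continuous (⇑(g : PP)) ∧ Monotone ⇑g ∧ IsPL g)
    {g : PP} (hg : g ∈ G) {x₀ x : XX} (h1 : oL G x₀ < (x:ℝ)) (h2 : (x:ℝ) < oR G x₀) :
    oL G x₀ < ((g x : XX):ℝ) ∧ ((g x : XX) : ℝ) < oR G x₀ := by
  obtain ⟨pX, hpfix, hpc⟩ := exists_oL_pt hG x₀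
  obtain ⟨qX, hqfix, hqc⟩ := exists_oR_pt hG x₀
  have hsm := g_sm hG hg
  constructor
  · have hpx : pX < x := by
      rw [← Subtype.coe_lt_coe, hpc]
      exact h1
    have h3 := hsm hpx
    rw [hpfix g hg] at h3
    rw [← hpc]
    exact Subtype.coe_lt_coe.mpr h3
  · have hxq : x < qX := by
      rw [← Subtype.coe_lt_coe, hqc]
      exact h2
    have h3 := hsm hxq
    rw [hqfix g hg] at h3
    rw [← hqc]
    exact Subtype.coe_lt_coe.mpr h3

/-! ### displacement lemma -/

lemma exists_push (hG : ∀ g ∈ G, Continuous (⇑(g : PP)) ∧ Monotone ⇑g ∧ IsPL g)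
    (hHG : H ≤ G)
    (hsupp : {x | ∃ h ∈ H, h x ≠ x} = {x | ∃ g ∈ G, g x ≠ x})
    {x₀ : XX} {u v : XX}
    (hu : oL G x₀ < (u:ℝ)) (huv : (u:ℝ) ≤ v) (hv : (v:ℝ) < oR G x₀) :
    ∃ w ∈ H, (v:ℝ) < ((w u : XX) : ℝ) := by
  by_contra hcon
  push_neg at hcon
  set S : Set ℝ := (fun hh : PP => ((hh u : XX) : ℝ)) '' {hh : PP | hh ∈ H} with hS
  have h1u : ((1 : PP) u : ℝ) = (u : ℝ) := by simp
  have hmem1 : (u:ℝ) ∈ S := ⟨1, H.one_mem, h1u⟩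
  have hSne : S.Nonempty := ⟨(u:ℝ), hmem1⟩
  have hSb : BddAbove S := by
    refine ⟨1, ?_⟩
    rintro r ⟨hh, _, rfl⟩
    exact (hh u).2.2
  have hus : (u:ℝ) ≤ sSup S := le_csSup hSb hmem1
  have hsv : sSup S ≤ v := by
    apply csSup_le hSne
    rintro r ⟨hh, hhH, rfl⟩
    exact hcon hh hhH
  have hs0 : 0 ≤ sSup S := le_trans u.2.1 hus
  have hs1 : sSup S ≤ 1 := le_trans hsv v.2.2
  set sX : XX := ⟨sSup S, hs0, hs1⟩ with hsX
  have hstrip1 : oL G x₀ < (sX:ℝ) := lt_of_lt_of_le hu hus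
  have hstrip2 : (sX:ℝ) < oR G x₀ := lt_of_le_of_lt hsv hv
  have hnf : sX ∉ FixAll G := strip_not_fix hG hstrip1 hstrip2
  have hmove : ∃ hh ∈ H, hh sX ≠ sX := by
    have h1 : sX ∈ {x : XX | ∃ g ∈ G, g x ≠ x} := by
      by_contra h2
      apply hnf
      intro g hg
      by_contra h3
      exact h2 ⟨g, hg, h3⟩
    rw [← hsupp] at h1
    exact h1
  obtain ⟨h₀, h₀H, h₀ne⟩ := hmove
  have hup : ∃ hh, hh ∈ H ∧ sX < hh sX := by
    rcases lt_or_gt_of_ne h₀ne with hlt | hgt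
    · refine ⟨h₀⁻¹, H.inv_mem h₀H, ?_⟩
      have hsm := g_sm hG (hHG (H.inv_mem h₀H))
      have h4 := hsm hlt
      simpa using h4
    · exact ⟨h₀, h₀H, hgt⟩
  obtain ⟨w0, hw0H, hw0⟩ := hup
  have hcont : Continuous fun x : XX => ((w0 x : XX) : ℝ) :=
    continuous_subtype_val.comp (hG w0 (hHG hw0H)).1
  have hopen : IsOpen {x : XX | (sX:ℝ) < ((w0 x : XX):ℝ)} := isOpen_lt continuous_const hcont
  have hmemS : sX ∈ {x : XX | (sX:ℝ) < ((w0 x : XX):ℝ)} := Subtype.coe_lt_coe.mpr hw0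
  obtain ⟨ε, hε, hball⟩ := Metric.isOpen_iff.mp hopen sX hmemS
  obtain ⟨r, hrS, hrgt⟩ := exists_lt_of_lt_csSup hSne (by linarith : sSup S - ε < sSup S)
  obtain ⟨h₁, h₁H, rfl⟩ := hrS
  have hrle : ((h₁ u : XX):ℝ) ≤ sSup S := le_csSup hSb ⟨h₁, h₁H, rfl⟩
  have hdist : (h₁ u) ∈ Metric.ball sX ε := by
    rw [Metric.mem_ball, Subtype.dist_eq, Real.dist_eq, abs_sub_lt_iff]
    constructor
    · simp only [hsX]
      linarith
    · simp only [hsX]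
      linarith
  have hx := hball hdist
  have hle2 : (((w0 * h₁) u : XX):ℝ) ≤ sSup S := le_csSup hSb ⟨w0 * h₁, H.mul_mem hw0H h₁H, rfl⟩
  rw [Equiv.Perm.mul_apply] at hle2
  exact absurd hx (not_lt.mpr hle2)

/-! ### finitely many active orbitals -/

lemma finite_orb (hG : ∀ g ∈ G, Continuous (⇑(g : PP)) ∧ Monotone ⇑g ∧ IsPL g)
    (hperf : G = ⁅G, G⁆) {g : PP} (hg : g ∈ G) : (oL G '' supp g).Finite := by
  obtain ⟨n, t, hmn, h0, h1, hpieces⟩ := (hG g hg).2.2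
  have key : ∀ x ∈ supp g, ∃ i : Fin (n+2), oL G x < t i ∧ t i < oR G x := by
    intro x hx
    have hxnf : x ∉ FixAll G := fun hf => hx (hf g hg)
    by_contra hc
    push_neg at hc
    have hx1 : (x:ℝ) < 1 := by
      rcases lt_or_eq_of_le x.2.2 with h | h
      · exact h
      · exfalso
        have hxz : x = z1 := Subtype.ext h
        rw [hxz] at hx
        exact hx (perm_fix_z1 g (hG g hg).2.1)
    obtain ⟨j, hj1, hj2⟩ := piece_find hmn h0 h1 x.2.1 hx1
    obtain ⟨a, b, hab⟩ := hpieces j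
    have hpltx : oL G x < x := oL_lt hG hxnf
    have hxltq : (x:ℝ) < oR G x := lt_oR hG hxnf
    have hcs : t j.castSucc ≤ oL G x := by
      by_contra h
      push_neg at h
      have h2 := hc j.castSucc h
      exact absurd (lt_of_le_of_lt hj1 hxltq) (not_lt.mpr h2)
    have hss : oR G x ≤ t j.succ := hc j.succ (lt_trans hpltx hj2)
    obtain ⟨pX, hpfix, hpc⟩ := exists_oL_pt hG x
    obtain ⟨δ, hδ, hid⟩ := near_id hG hperf hpfix hg
    rw [hpc] at hid
    have hp0 : 0 ≤ oL G x := oL_nonneg hG x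
    have hy2gt : oL G x < min (oL G x + δ) ((oL G x + x)/2) := by
      apply lt_min
      · linarith
      · linarith
    have hy2lex : min (oL G x + δ) ((oL G x + x)/2) ≤ (x:ℝ) := by
      have := min_le_right (oL G x + δ) ((oL G x + x)/2)
      linarith
    have hy2mem : min (oL G x + δ) ((oL G x + x)/2) ∈ Icc (0:ℝ) 1 :=
      ⟨by linarith, by linarith [x.2.2]⟩
    set yX : XX := ⟨min (oL G x + δ) ((oL G x + x)/2), hy2mem⟩ with hyX
    have hfix1 : g pX = pX := by
      apply hid pX
      rw [hpc]
      simp only [sub_self, abs_zero]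
      exact hδ.le
    have hfix2 : g yX = yX := by
      apply hid yX
      rw [abs_le]
      constructor
      · simp only [hyX]
        linarith
      · simp only [hyX]
        have := min_le_left (oL G x + δ) ((oL G x + x)/2)
        linarith
    have hpXmem : (pX:ℝ) ∈ Icc (t j.castSucc) (t j.succ) := by
      rw [hpc]
      exact ⟨hcs, by linarith⟩
    have hyXmem : (yX:ℝ) ∈ Icc (t j.castSucc) (t j.succ) := by
      constructor
      · simp only [hyX]
        linarith
      · simp only [hyX]
        linarith
    have e1 := hab pX hpXmem
    rw [hfix1] at e1
    have e2 := hab yX hyXmem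
    rw [hfix2] at e2
    have hane : (a - 1) * ((pX:ℝ) - (yX:ℝ)) = 0 := by linear_combination e2 - e1
    have hne : (pX:ℝ) - (yX:ℝ) ≠ 0 := by
      rw [hpc]
      simp only [hyX]
      intro hcontra
      linarith
    have ha1 : a = 1 := by
      rcases mul_eq_zero.mp hane with h | h
      · linarith
      · exact absurd h hne
    have hb0 : b = 0 := by
      rw [ha1] at e1
      linarith
    have hxm : (x:ℝ) ∈ Icc (t j.castSucc) (t j.succ) := ⟨by linarith, by linarith⟩
    have hfx := hab x hxm
    rw [ha1, hb0] at hfx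
    apply hx
    apply Subtype.ext
    rw [hfx]
    ring
  rw [← Set.finite_coe_iff]
  have hsel : ∀ rr : ↥(oL G '' supp g),
      ∃ i : Fin (n+2), ∃ x, x ∈ supp g ∧ oL G x = (rr:ℝ) ∧ oL G x < t i ∧ t i < oR G x := by
    rintro ⟨r, x, hx, rfl⟩
    obtain ⟨i, hi1, hi2⟩ := key x hx
    exact ⟨i, x, hx, rfl, hi1, hi2⟩
  refine Finite.of_injective (fun rr => Classical.choose (hsel rr)) ?_
  intro r1 r2 hre
  have hre' : Classical.choose (hsel r1) = Classical.choose (hsel r2) := hre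
  obtain ⟨x1, hx1, hc1, hlt1, hlt1'⟩ := Classical.choose_spec (hsel r1)
  obtain ⟨x2, hx2, hc2, hlt2, hlt2'⟩ := Classical.choose_spec (hsel r2)
  rw [hre'] at hlt1 hlt1'
  have hτ0 : 0 ≤ t (Classical.choose (hsel r2)) := by
    have := oL_nonneg hG x1
    linarith
  have hτ1 : t (Classical.choose (hsel r2)) ≤ 1 := by
    have := oR_le_one hG x1
    linarith
  set τX : XX := ⟨t (Classical.choose (hsel r2)), hτ0, hτ1⟩ with hτX
  have h1 : oL G τX = oL G x1 := oL_strip hG hlt1 hlt1'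
  have h2 : oL G τX = oL G x2 := oL_strip hG hlt2 hlt2'
  apply Subtype.ext
  rw [← hc1, ← hc2, ← h1, ← h2]

/-! ### support of conjugates -/

lemma supp_conj (w z : PP) : supp (w * z * w⁻¹) = (⇑w) '' supp z := by
  ext x
  rw [Set.mem_image_equiv]
  simp only [supp, mem_setOf_eq]
  have hcalc : (w * z * w⁻¹) x = w (z (w.symm x)) := by
    simp [Equiv.Perm.mul_apply, Equiv.Perm.inv_def]
  rw [hcalc]
  constructor
  · intro h hcon
    apply h
    rw [hcon]
    simp
  · intro h hcon
    apply h
    have := congrArg w.symm hcon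
    simpa using this

/-! ### the main induction -/

lemma main_ind [inst : (H.subgroupOf G).Normal]
    (hG : ∀ g ∈ G, Continuous (⇑(g : PP)) ∧ Monotone ⇑g ∧ IsPL g)
    (hperf : G = ⁅G, G⁆)
    (hHG : H ≤ G) (hnorm : ∀ g ∈ G, ∀ h ∈ H, g⁻¹ * h * g ∈ H)
    (hsupp : {x | ∃ h ∈ H, h x ≠ x} = {x | ∃ g ∈ G, g x ≠ x}) :
    ∀ k : ℕ, ∀ z : ↥G, (oL G '' supp (↑z : PP)).ncard ≤ k →
      ∀ y : ↥G, ⁅QuotientGroup.mk' (H.subgroupOf G) z, QuotientGroup.mk' (H.subgroupOf G) y⁆ = 1 := by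
  set π := QuotientGroup.mk' (H.subgroupOf G) with hπ
  have htrivcase : ∀ z : ↥G, supp (↑z : PP) = ∅ → ∀ y : ↥G, ⁅π z, π y⁆ = 1 := by
    intro z hzempty y
    have hz1 : (↑z : PP) = 1 := by
      apply Equiv.ext
      intro xx
      have hxx : xx ∉ supp (↑z : PP) := by
        rw [hzempty]
        exact notMem_empty xx
      exact not_supp hxx
    have hzone : z = (1 : ↥G) := Subtype.ext hz1
    rw [hzone, map_one]
    exact commutatorElement_one_left _
  intro k
  induction k with
  | zero =>
    intro z hz y
    have hfin := finite_orb hG hperf z.2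
    have h0 : (oL G '' supp (↑z : PP)).ncard = 0 := Nat.le_zero.mp hz
    have hempty : oL G '' supp (↑z : PP) = ∅ := (Set.ncard_eq_zero hfin).mp h0
    exact htrivcase z (Set.image_eq_empty.mp hempty) y
  | succ k IH =>
    intro z hz y
    rcases eq_empty_or_nonempty (supp (↑z : PP)) with hzempty | ⟨x₀, hx₀⟩
    · exact htrivcase z hzempty y
    -- setup
    have hzG : (↑z : PP) ∈ G := z.2
    have hx₀nf : x₀ ∉ FixAll G := fun hf => hx₀ (hf _ hzG)
    -- centrality of all commutators with z
    have hcent : ∀ y' : ↥G, ⁅π z, π y'⁆ ∈ Subgroup.center (↥G ⧸ H.subgroupOf G) := by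
      intro y'
      have hyG : (↑y' : PP) ∈ G := y'.2
      obtain ⟨pX, hpfix, hpc⟩ := exists_oL_pt hG x₀
      obtain ⟨qX, hqfix, hqc⟩ := exists_oR_pt hG x₀
      obtain ⟨δzp, hδzp, hidzp⟩ := near_id hG hperf hpfix hzG
      obtain ⟨δyp, hδyp, hidyp⟩ := near_id hG hperf hpfix hyG
      obtain ⟨δzq, hδzq, hidzq⟩ := near_id hG hperf hqfix hzG
      obtain ⟨δyq, hδyq, hidyq⟩ := near_id hG hperf hqfix hyG
      rw [hpc] at hidzp hidyp
      rw [hqc] at hidzq hidyq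
      have hplt : oL G x₀ < (x₀:ℝ) := oL_lt hG hx₀nf
      have hqgt : (x₀:ℝ) < oR G x₀ := lt_oR hG hx₀nf
      have hp0 : 0 ≤ oL G x₀ := oL_nonneg hG x₀
      have hq1 : oR G x₀ ≤ 1 := oR_le_one hG x₀
      -- x₀ is moved by z, so it is far from both ends
      have hx₀p : oL G x₀ + δzp < (x₀:ℝ) := by
        by_contra hcc
        push_neg at hcc
        exact hx₀ (hidzp x₀ (by rw [abs_le]; constructor <;> linarith))
      have hx₀q : (x₀:ℝ) < oR G x₀ - δzq := by
        by_contra hcc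
        push_neg at hcc
        exact hx₀ (hidzq x₀ (by rw [abs_le]; constructor <;> linarith))
      have hup : oL G x₀ < oL G x₀ + min δzp δyp := by
        have := lt_min hδzp hδyp
        linarith
      have hux : oL G x₀ + min δzp δyp < (x₀:ℝ) := by
        have := min_le_left δzp δyp
        linarith
      have hxv : (x₀:ℝ) < oR G x₀ - min δzq δyq := by
        have := min_le_left δzq δyq
        linarith
      have hvq : oR G x₀ - min δzq δyq < oR G x₀ := by
        have := lt_min hδzq hδyq
        linarith
      set ur : ℝ := oL G x₀ + min δzp δyp with hur
      set vr : ℝ := oR G x₀ - min δzq δyq with hvr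
      have hurmem : ur ∈ Icc (0:ℝ) 1 := ⟨by linarith, by linarith [x₀.2.2]⟩
      have hvrmem : vr ∈ Icc (0:ℝ) 1 := ⟨by linarith [x₀.2.1], by linarith⟩
      set uX : XX := ⟨ur, hurmem⟩ with huX
      set vX : XX := ⟨vr, hvrmem⟩ with hvX
      obtain ⟨w, hwH, hw⟩ := exists_push (x₀ := x₀) (u := uX) (v := vX) hG hHG hsupp
        hup (by simp only [huX, hvX]; linarith) hvq
      have hwG : w ∈ G := hHG hwH
      -- bounds for the supports of z and y' inside the strip
      have hzbd : ∀ xx : XX, oL G x₀ < (xx:ℝ) → (xx:ℝ) < oR G x₀ → xx ∈ supp (↑z : PP) →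
          ur ≤ (xx:ℝ) ∧ (xx:ℝ) ≤ vr := by
        intro xx h1 h2 hxx
        constructor
        · by_contra hcc
          push_neg at hcc
          apply hxx
          apply hidzp xx
          rw [abs_le]
          have := min_le_left δzp δyp
          constructor <;> [linarith; linarith [hcc.le]]
        · by_contra hcc
          push_neg at hcc
          apply hxx
          apply hidzq xx
          rw [abs_le]
          have := min_le_left δzq δyq
          constructor <;> [linarith [hcc.le]; linarith]
      have hybd : ∀ xx : XX, oL G x₀ < (xx:ℝ) → (xx:ℝ) < oR G x₀ → xx ∈ supp (↑y' : PP) →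
          ur ≤ (xx:ℝ) ∧ (xx:ℝ) ≤ vr := by
        intro xx h1 h2 hxx
        constructor
        · by_contra hcc
          push_neg at hcc
          apply hxx
          apply hidyp xx
          rw [abs_le]
          have := min_le_right δzp δyp
          constructor <;> [linarith; linarith [hcc.le]]
        · by_contra hcc
          push_neg at hcc
          apply hxx
          apply hidyq xx
          rw [abs_le]
          have := min_le_right δzq δyq
          constructor <;> [linarith [hcc.le]; linarith]
      -- the conjugated element
      set z1v : PP := w * (↑z : PP) * w⁻¹ with hz1v
      have hz1G : z1v ∈ G := G.mul_mem (G.mul_mem hwG hzG) (G.inv_mem hwG)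
      have hz1supp : ∀ xx : XX, oL G x₀ < (xx:ℝ) → (xx:ℝ) < oR G x₀ → xx ∈ supp z1v →
          vr < (xx:ℝ) := by
        intro xx h1 h2 h3
        rw [hz1v, supp_conj, Set.mem_image_equiv] at h3
        have hwinv : (w.symm : PP) = w⁻¹ := (Equiv.Perm.inv_def w).symm
        have h3' : (w⁻¹ : PP) xx ∈ supp (↑z : PP) := by rw [← hwinv]; exact h3
        have hstr := strip_apply hG (G.inv_mem hwG) h1 h2
        have hbd := hzbd _ hstr.1 hstr.2 h3'
        have hle : uX ≤ (w⁻¹ : PP) xx := by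
          rw [← Subtype.coe_le_coe]
          exact hbd.1
        have hm := (hG w hwG).2.1 hle
        have hww : w ((w⁻¹ : PP) xx) = xx := by simp
        rw [hww] at hm
        have : (vX:ℝ) < ((w uX : XX):ℝ) := hw
        have h5 : ((w uX : XX):ℝ) ≤ (xx:ℝ) := Subtype.coe_le_coe.mpr hm
        simp only [hvX] at this
        linarith
      have hysupp : ∀ xx : XX, oL G x₀ < (xx:ℝ) → (xx:ℝ) < oR G x₀ → xx ∈ supp (↑y' : PP) →
          (xx:ℝ) ≤ vr := fun xx h1 h2 h3 => (hybd xx h1 h2 h3).2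
      -- pointwise commutation on the strip
      have hcomm : ∀ xx : XX, oL G x₀ < (xx:ℝ) → (xx:ℝ) < oR G x₀ →
          z1v ((↑y' : PP) xx) = (↑y' : PP) (z1v xx) := by
        intro xx h1 h2
        by_cases hza : xx ∈ supp z1v
        · have hv1 : vr < (xx:ℝ) := hz1supp xx h1 h2 hza
          have hyfix : (↑y' : PP) xx = xx :=
            not_supp (fun hy => absurd (hysupp xx h1 h2 hy) (not_le.mpr hv1))
          rw [hyfix]
          have hz1xx : z1v xx ∈ supp z1v := supp_apply_mem hza
          have hstr := strip_apply hG hz1G h1 h2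
          have hv2 : vr < ((z1v xx : XX):ℝ) := hz1supp _ hstr.1 hstr.2 hz1xx
          have hfix2 : (↑y' : PP) (z1v xx) = z1v xx :=
            not_supp (fun hy => absurd (hysupp _ hstr.1 hstr.2 hy) (not_le.mpr hv2))
          rw [hfix2]
        · have hzfix : z1v xx = xx := not_supp hza
          rw [hzfix]
          by_cases hyb : xx ∈ supp (↑y' : PP)
          · have hstr := strip_apply hG hyG h1 h2
            have hyxx : (↑y' : PP) xx ∈ supp (↑y' : PP) := supp_apply_mem hyb
            have hle := hysupp _ hstr.1 hstr.2 hyxx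
            have hnz : (↑y' : PP) xx ∉ supp z1v :=
              fun hzz => absurd (hz1supp _ hstr.1 hstr.2 hzz) (not_lt.mpr hle)
            rw [not_supp hnz]
          · rw [not_supp hyb]
            exact hzfix
      -- the commutator element
      have hcval : (↑(⁅(⟨z1v, hz1G⟩ : ↥G), y'⁆ : ↥G) : PP)
          = z1v * (↑y' : PP) * z1v⁻¹ * (↑y' : PP)⁻¹ := by
        rw [commutatorElement_def]
        push_cast
        rfl
      have hcfix : ∀ xx : XX, oL G x₀ < (xx:ℝ) → (xx:ℝ) < oR G x₀ →
          (↑(⁅(⟨z1v, hz1G⟩ : ↥G), y'⁆ : ↥G) : PP) xx = xx := by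
        intro xx h1 h2
        have hstr1 := strip_apply hG (G.inv_mem y'.2) h1 h2
        have hstr2 := strip_apply hG (G.inv_mem hz1G) hstr1.1 hstr1.2
        have hc := hcomm (z1v⁻¹ ((↑y' : PP)⁻¹ xx)) hstr2.1 hstr2.2
        rw [hcval]
        simp only [Equiv.Perm.mul_apply]
        rw [hc]
        simp
      -- π cG = ⁅π z, π y'⁆
      have hπz1 : π (⟨z1v, hz1G⟩ : ↥G) = π z := by
        have hmem : (⟨z1v, hz1G⟩ : ↥G) * z⁻¹ ∈ H.subgroupOf G := by
          rw [Subgroup.mem_subgroupOf]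
          have hval : (↑((⟨z1v, hz1G⟩ : ↥G) * z⁻¹) : PP) = w * (↑z : PP) * w⁻¹ * (↑z : PP)⁻¹ := by
            push_cast
            rw [hz1v]
          rw [hval]
          have hA : (↑z : PP) * w⁻¹ * (↑z : PP)⁻¹ ∈ H := by
            have h6 := hnorm ((↑z : PP))⁻¹ (G.inv_mem hzG) w⁻¹ (H.inv_mem hwH)
            simpa [inv_inv] using h6
          have h7 := H.mul_mem hwH hA
          have heq : w * ((↑z : PP) * w⁻¹ * (↑z : PP)⁻¹) = w * (↑z : PP) * w⁻¹ * (↑z : PP)⁻¹ := by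
            group
          rw [← heq]
          exact h7
        have h8 : π ((⟨z1v, hz1G⟩ : ↥G) * z⁻¹) = 1 := by
          rw [← MonoidHom.mem_ker, hπ, QuotientGroup.ker_mk']
          exact hmem
        have h9 : π ((⟨z1v, hz1G⟩ : ↥G) * z⁻¹ * z) = π z := by
          rw [map_mul, h8, one_mul]
        rw [inv_mul_cancel_right] at h9
        exact h9
      have hπc : π (⁅(⟨z1v, hz1G⟩ : ↥G), y'⁆ : ↥G) = ⁅π z, π y'⁆ := by
        rw [map_commutatorElement, hπz1]
      -- the support of cG avoids the orbital of x₀ and is contained in that of z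
      have himg : oL G '' supp (↑(⁅(⟨z1v, hz1G⟩ : ↥G), y'⁆ : ↥G) : PP)
          ⊆ (oL G '' supp (↑z : PP)) \ {oL G x₀} := by
        rintro r ⟨xc, hxc, rfl⟩
        have hcGG : (↑(⁅(⟨z1v, hz1G⟩ : ↥G), y'⁆ : ↥G) : PP) ∈ G := (⁅(⟨z1v, hz1G⟩ : ↥G), y'⁆ : ↥G).2
        have hxcnf : xc ∉ FixAll G := fun hf => hxc (hf _ hcGG)
        constructor
        · -- oL G xc ∈ oL G '' supp z
          have hsplit : xc ∈ supp z1v ∨ ((↑y' : PP)⁻¹ xc) ∈ supp z1v := by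
            by_cases h1 : xc ∈ supp z1v
            · exact Or.inl h1
            · right
              by_contra h2
              apply hxc
              rw [hcval]
              simp only [Equiv.Perm.mul_apply]
              rw [not_supp_inv h2]
              have h3 : (↑y' : PP) ((↑y' : PP)⁻¹ xc) = xc := by simp
              rw [h3]
              exact not_supp h1
          have himg2 : ∀ xd : XX, xd ∈ supp z1v → oL G xd ∈ oL G '' supp (↑z : PP) := by
            intro xd hxd
            rw [hz1v, supp_conj] at hxd
            obtain ⟨xw, hxw, hxweq⟩ := hxd
            refine ⟨xw, hxw, ?_⟩
            rw [← hxweq]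
            exact (oL_apply hG hwG xw).symm
          rcases hsplit with h1 | h1
          · exact himg2 xc h1
          · have h4 := himg2 _ h1
            have h5 : oL G ((↑y' : PP)⁻¹ xc) = oL G xc := oL_apply hG (G.inv_mem y'.2) xc
            rw [← h5]
            exact h4
        · -- oL G xc ≠ oL G x₀
          intro hmem
          rw [mem_singleton_iff] at hmem
          have hstrip := strip_mem_of_oL_eq hG hxcnf hx₀nf hmem
          exact hxc (hcfix xc hstrip.1 hstrip.2)
      -- cardinality decreases
      have hfin := finite_orb hG hperf z.2
      have hple : oL G x₀ ∈ oL G '' supp (↑z : PP) := ⟨x₀, hx₀, rfl⟩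
      have hcard2 : (oL G '' supp (↑(⁅(⟨z1v, hz1G⟩ : ↥G), y'⁆ : ↥G) : PP)).ncard ≤ k := by
        have h1 : (oL G '' supp (↑(⁅(⟨z1v, hz1G⟩ : ↥G), y'⁆ : ↥G) : PP)).ncard
            ≤ ((oL G '' supp (↑z : PP)) \ {oL G x₀}).ncard :=
          Set.ncard_le_ncard himg (hfin.diff)
        have h2 : ((oL G '' supp (↑z : PP)) \ {oL G x₀}).ncard < (oL G '' supp (↑z : PP)).ncard :=
          Set.ncard_diff_singleton_lt_of_mem hple hfin
        omega
      -- apply induction hypothesis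
      have hccent : π (⁅(⟨z1v, hz1G⟩ : ↥G), y'⁆ : ↥G) ∈ Subgroup.center (↥G ⧸ H.subgroupOf G) := by
        rw [Subgroup.mem_center_iff]
        intro qq
        obtain ⟨y'', rfl⟩ := QuotientGroup.mk'_surjective (H.subgroupOf G) qq
        exact ((commutatorElement_eq_one_iff_commute.mp
          (IH (⁅(⟨z1v, hz1G⟩ : ↥G), y'⁆ : ↥G) hcard2 y'')).symm).eq
      rw [← hπc]
      exact hccent
    -- Grün-style argument
    have hcentq : ∀ qq : ↥G ⧸ H.subgroupOf G, ⁅π z, qq⁆ ∈ Subgroup.center (↥G ⧸ H.subgroupOf G) := by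
      intro qq
      obtain ⟨y', rfl⟩ := QuotientGroup.mk'_surjective (H.subgroupOf G) qq
      exact hcent y'
    have hmul : ∀ q1 q2 : ↥G ⧸ H.subgroupOf G, ⁅π z, q1 * q2⁆ = ⁅π z, q1⁆ * ⁅π z, q2⁆ := by
      intro q1 q2
      have h1 : ⁅π z, q1 * q2⁆ = ⁅π z, q1⁆ * (q1 * ⁅π z, q2⁆ * q1⁻¹) := by
        rw [commutatorElement_def, commutatorElement_def, commutatorElement_def]
        group
      rw [h1, Subgroup.mem_center_iff.mp (hcentq q2) q1, mul_inv_cancel_right]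
    have hinv : ∀ qq : ↥G ⧸ H.subgroupOf G, ⁅π z, qq⁻¹⁆ = ⁅π z, qq⁆⁻¹ := by
      intro qq
      have h0 : ⁅π z, qq⁆ * ⁅π z, qq⁻¹⁆ = 1 := by
        rw [← hmul]
        simp
      exact (mul_eq_one_iff_inv_eq.mp h0).symm
    have hker : ∀ (wv : PP) (hwc : wv ∈ ⁅G, G⁆) (hwG : wv ∈ G), ⁅π z, π ⟨wv, hwG⟩⁆ = 1 := by
      intro wv hwc
      rw [Subgroup.commutator_def] at hwc
      induction hwc using Subgroup.closure_induction with
      | mem xv hxv =>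
        intro hxG
        obtain ⟨g₁, hg₁, g₂, hg₂, rfl⟩ := hxv
        have hsub : (⟨⁅g₁, g₂⁆, hxG⟩ : ↥G) = ⁅(⟨g₁, hg₁⟩ : ↥G), (⟨g₂, hg₂⟩ : ↥G)⁆ := by
          apply Subtype.ext
          push_cast
          rfl
        rw [hsub, map_commutatorElement]
        rw [commutatorElement_def (π ⟨g₁, hg₁⟩) (π ⟨g₂, hg₂⟩)]
        rw [hmul, hmul, hmul, hinv, hinv]
        have hcom : ⁅π z, π ⟨g₁, hg₁⟩⁆ * ⁅π z, π ⟨g₂, hg₂⟩⁆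
            = ⁅π z, π ⟨g₂, hg₂⟩⁆ * ⁅π z, π ⟨g₁, hg₁⟩⁆ :=
          (Subgroup.mem_center_iff.mp (hcentq (π ⟨g₁, hg₁⟩)) _).symm
        rw [hcom]
        group
      | one =>
        intro h1G
        have hsub : (⟨1, h1G⟩ : ↥G) = 1 := rfl
        rw [hsub, map_one]
        exact commutatorElement_one_right _
      | mul xv yv hxv hyv ihx ihy =>
        intro hxyG
        have hxG : xv ∈ G := by
          rw [hperf, Subgroup.commutator_def]
          exact hxv
        have hyG : yv ∈ G := by
          rw [hperf, Subgroup.commutator_def]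
          exact hyv
        have hsub : (⟨xv * yv, hxyG⟩ : ↥G) = ⟨xv, hxG⟩ * ⟨yv, hyG⟩ := rfl
        rw [hsub, map_mul, hmul, ihx hxG, ihy hyG, one_mul]
      | inv xv hxv ih =>
        intro hxiG
        have hxG : xv ∈ G := by
          rw [hperf, Subgroup.commutator_def]
          exact hxv
        have hsub : (⟨xv⁻¹, hxiG⟩ : ↥G) = (⟨xv, hxG⟩ : ↥G)⁻¹ := rfl
        rw [hsub, map_inv, hinv, ih hxG, inv_one]
    have hy2 : (↑y : PP) ∈ ⁅G, G⁆ := by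
      rw [← hperf]
      exact y.2
    have := hker (↑y) hy2 y.2
    exact this

end Main

end

end Stmt4Aux

theorem stmt4
    (G H : Subgroup (Equiv.Perm (Icc (0:ℝ) 1)))
    (hG : ∀ g ∈ G, Continuous (⇑(g : Equiv.Perm (Icc (0:ℝ) 1))) ∧ Monotone ⇑g ∧ IsPL g)
    (hperf : G = ⁅G, G⁆)
    (hHG : H ≤ G) (hnorm : ∀ g ∈ G, ∀ h ∈ H, g⁻¹ * h * g ∈ H)
    (hsupp : {x | ∃ h ∈ H, h x ≠ x} = {x | ∃ g ∈ G, g x ≠ x}) :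
    H = G := by
  haveI nN : (H.subgroupOf G).Normal := by
    constructor
    intro nn hnn gg
    rw [Subgroup.mem_subgroupOf] at hnn ⊢
    have h2 := hnorm ((gg : Equiv.Perm (Icc (0:ℝ) 1)))⁻¹ (G.inv_mem gg.2) nn hnn
    simpa [inv_inv] using h2
  have hGH : G ≤ H := by
    intro w hw
    have hker2 : ∀ (wv : Equiv.Perm (Icc (0:ℝ) 1)) (hwc : wv ∈ ⁅G, G⁆) (hwG : wv ∈ G),
        QuotientGroup.mk' (H.subgroupOf G) ⟨wv, hwG⟩ = 1 := by
      intro wv hwc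
      rw [Subgroup.commutator_def] at hwc
      induction hwc using Subgroup.closure_induction with
      | mem xv hxv =>
        intro hxG
        obtain ⟨g₁, hg₁, g₂, hg₂, rfl⟩ := hxv
        have hsub : (⟨⁅g₁, g₂⁆, hxG⟩ : ↥G) = ⁅(⟨g₁, hg₁⟩ : ↥G), (⟨g₂, hg₂⟩ : ↥G)⁆ := by
          apply Subtype.ext
          push_cast
          rfl
        rw [hsub, map_commutatorElement]
        exact Stmt4Aux.main_ind hG hperf hHG hnorm hsupp _ ⟨g₁, hg₁⟩ le_rfl ⟨g₂, hg₂⟩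
      | one =>
        intro h1G
        have hsub : (⟨1, h1G⟩ : ↥G) = 1 := rfl
        rw [hsub, map_one]
      | mul xv yv hxv hyv ihx ihy =>
        intro hxyG
        have hxG : xv ∈ G := by
          rw [hperf, Subgroup.commutator_def]
          exact hxv
        have hyG : yv ∈ G := by
          rw [hperf, Subgroup.commutator_def]
          exact hyv
        have hsub : (⟨xv * yv, hxyG⟩ : ↥G) = ⟨xv, hxG⟩ * ⟨yv, hyG⟩ := rfl
        rw [hsub, map_mul, ihx hxG, ihy hyG, one_mul]
      | inv xv hxv ih =>
        intro hxiG
        have hxG : xv ∈ G := by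
          rw [hperf, Subgroup.commutator_def]
          exact hxv
        have hsub : (⟨xv⁻¹, hxiG⟩ : ↥G) = (⟨xv, hxG⟩ : ↥G)⁻¹ := rfl
        rw [hsub, map_inv, ih hxG, inv_one]
    have hwc : w ∈ ⁅G, G⁆ := by
      rw [← hperf]
      exact hw
    have h1 := hker2 w hwc hw
    have h2 : (⟨w, hw⟩ : ↥G) ∈ (QuotientGroup.mk' (H.subgroupOf G)).ker :=
      MonoidHom.mem_ker.mpr h1
    rw [QuotientGroup.ker_mk'] at h2
    exact Subgroup.mem_subgroupOf.mp h2
  exact le_antisymm hHG hGH
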